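/- Let M be a Hermitian matrix on ℂ^{Fin a × Fin b} (a, b ≥ 1) such that M commutes with I_a ⊗ D for every diagonal b×b complex matrix D (where ⊗ is the Kronecker product and I_a the a×a identity). Then there exist an index σ ∈ Fin b and a unit vector ψ ∈ ℂ^a such that M(ψ ⊗ e_σ) = λ_max(M)·(ψ ⊗ e_σ), i.e., M admits a maximal eigenvector of product form with a standard basis vector on the second factor. -/

import Mathlib

open Matrix Kronecker

/-- **Product-form maximal eigenvector.**
Let `M` be a Hermitian matrix on `ℂ^{Fin a × Fin b}` (`a, b ≥ 1`) commuting with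
`I ⊗ D` for every diagonal `b×b` matrix `D`.  Then `M` has a maximal eigenvector of
product form `ψ ⊗ e_σ`, with `ψ ∈ ℂ^a` a unit vector and `e_σ` a standard basis
vector: `M(ψ ⊗ e_σ) = λ_max(M)·(ψ ⊗ e_σ)`. -/
theorem product_form_max_eigenvector (a b : ℕ) (ha : 1 ≤ a) (hb : 1 ≤ b)
    (M : Matrix (Fin a × Fin b) (Fin a × Fin b) ℂ) (hM : M.IsHermitian)
    (hcomm : ∀ D : Matrix (Fin b) (Fin b) ℂ, D.IsDiag →
      Commute M ((1 : Matrix (Fin a) (Fin a) ℂ) ⊗ₖ D)) :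
    ∃ (σ : Fin b) (ψ : EuclideanSpace ℂ (Fin a)), ‖ψ‖ = 1 ∧
      (M *ᵥ fun p => ψ p.1 * (Pi.single σ 1 : Fin b → ℂ) p.2) =
        fun p => ((⨆ i, hM.eigenvalues i : ℝ) : ℂ) *
          (ψ p.1 * (Pi.single σ 1 : Fin b → ℂ) p.2) := by
  haveI : Nonempty (Fin a) := Fin.pos_iff_nonempty.mp ha
  haveI : Nonempty (Fin b) := Fin.pos_iff_nonempty.mp hb
  -- Step 1: block structure
  have hblock : ∀ p q : Fin a × Fin b, p.2 ≠ q.2 → M p q = 0 := by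
    intro p q hpq
    have h := hcomm (Matrix.diagonal ((Pi.single q.2 1 : Fin b → ℂ))) (Matrix.isDiag_diagonal _)
    have h1 : (1 : Matrix (Fin a) (Fin a) ℂ) ⊗ₖ Matrix.diagonal ((Pi.single q.2 1 : Fin b → ℂ))
        = Matrix.diagonal (fun p : Fin a × Fin b => (Pi.single q.2 1 : Fin b → ℂ) p.2) := by
      rw [← Matrix.diagonal_one, Matrix.diagonal_kronecker_diagonal]
      funext p
      simp
    rw [h1] at h
    have := congrFun (congrFun (h.eq) p) q
    rw [Matrix.mul_diagonal, Matrix.diagonal_mul] at this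
    simpa [Pi.single_eq_same, Pi.single_eq_of_ne hpq] using this
  -- Step 2: index attaining the max eigenvalue
  obtain ⟨i₀, hi₀⟩ := Finite.exists_max hM.eigenvalues
  have hmax : hM.eigenvalues i₀ = ⨆ i, hM.eigenvalues i :=
    le_antisymm (le_ciSup (Set.Finite.bddAbove (Set.finite_range _)) i₀) (ciSup_le hi₀)
  set lam : ℝ := ⨆ i, hM.eigenvalues i with hlam
  -- Step 3: eigenvector
  set u : EuclideanSpace ℂ (Fin a × Fin b) := hM.eigenvectorBasis i₀ with hu
  have hMu : M *ᵥ ⇑u = lam • ⇑u := by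
    rw [hu, hM.mulVec_eigenvectorBasis i₀, hmax]
  have hex : ∃ p : Fin a × Fin b, u p ≠ 0 := by
    by_contra h
    push_neg at h
    exact hM.eigenvectorBasis.orthonormal.ne_zero i₀ (by ext p; exact h p)
  obtain ⟨⟨i₁, σ⟩, hσ⟩ := hex
  -- the σ-block of u
  set uσ : (Fin a × Fin b) → ℂ := fun p => if p.2 = σ then u p else 0 with huσ
  have hMuσ : M *ᵥ uσ = lam • uσ := by
    funext p
    simp only [Matrix.mulVec, dotProduct, Pi.smul_apply, smul_eq_mul, huσ]
    by_cases hp : p.2 = σ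
    · have h1 : ∑ q : Fin a × Fin b, (M p q * if q.2 = σ then u q else 0)
          = ∑ q : Fin a × Fin b, M p q * u q := by
        apply Finset.sum_congr rfl
        intro q _
        by_cases hq : q.2 = σ
        · simp [hq]
        · rw [hblock p q (by rw [hp]; exact fun h' => hq h'.symm), if_neg hq, zero_mul, zero_mul]
      rw [h1, if_pos hp]
      have h2 := congrFun hMu p
      simpa [Matrix.mulVec, dotProduct, Complex.real_smul] using h2
    · rw [if_neg hp, smul_zero]
      apply Finset.sum_eq_zero
      intro q _
      by_cases hq : q.2 = σ
      · rw [hblock p q (by rw [hq]; exact hp), zero_mul]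
      · simp [hq]
  -- Step 4: normalize
  set v : EuclideanSpace ℂ (Fin a) := WithLp.toLp 2 (fun i => u (i, σ)) with hv
  have hvne : v ≠ 0 := by
    intro h
    exact hσ (by simpa [hv] using congrFun (congrArg (fun (w : EuclideanSpace ℂ (Fin a)) => (w : Fin a → ℂ)) h) i₁)
  have hnv : ‖v‖ ≠ 0 := norm_ne_zero_iff.mpr hvne
  set c : ℂ := ((‖v‖⁻¹ : ℝ) : ℂ) with hc
  refine ⟨σ, c • v, ?_, ?_⟩
  · rw [norm_smul, hc, Complex.norm_real, Real.norm_eq_abs,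
      abs_of_nonneg (inv_nonneg.mpr (norm_nonneg v)), inv_mul_cancel₀ hnv]
  · have hw : (fun p : Fin a × Fin b => (c • v) p.1 * (Pi.single σ 1 : Fin b → ℂ) p.2)
        = c • uσ := by
      funext p
      obtain ⟨p1, p2⟩ := p
      by_cases hp : p2 = σ
      · subst hp
        simp [huσ, hv, Pi.single_eq_same]
      · simp [huσ, hp, Pi.single_eq_of_ne hp]
    rw [hw, Matrix.mulVec_smul, hMuσ]
    funext p
    have h3 := congrFun hw p
    simp only [Pi.smul_apply, smul_eq_mul, Complex.real_smul] at h3 ⊢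
    rw [h3]
    ring
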